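/- Let (X,d) be a compact metric space and f : X → X a continuous c-expansive surjection. If f has shadowing, then f has s-limit shadowing. -/

import Mathlib

open Filter Topology

def Shadowing {X : Type*} [MetricSpace X] (f : X → X) : Prop :=
  ∀ ε : ℝ, 0 < ε → ∃ δ : ℝ, 0 < δ ∧ ∀ σ : ℕ → X,
    (∀ n, dist (f (σ n)) (σ (n + 1)) < δ) →
    ∃ y : X, ∀ n, dist (f^[n] y) (σ n) < ε

def CExpansive {X : Type*} [MetricSpace X] (f : X → X) : Prop :=
  ∃ b : ℝ, 0 < b ∧ ∀ x y : ℤ → X,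
    (∀ n : ℤ, f (x n) = x (n + 1)) → (∀ n : ℤ, f (y n) = y (n + 1)) →
    (∀ n : ℤ, dist (x n) (y n) < b) → x 0 = y 0

def SLimitShadowing {X : Type*} [MetricSpace X] (f : X → X) : Prop :=
  ∀ ε : ℝ, 0 < ε → ∃ δ : ℝ, 0 < δ ∧
    (∀ σ : ℕ → X, (∀ n, dist (f (σ n)) (σ (n + 1)) < δ) →
      ∃ y : X, ∀ n, dist (f^[n] y) (σ n) < ε) ∧
    (∀ σ : ℕ → X, (∀ n, dist (f (σ n)) (σ (n + 1)) < δ) →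
      Tendsto (fun n => dist (f (σ n)) (σ (n + 1))) atTop (𝓝 0) →
      ∃ y : X, (∀ n, dist (f^[n] y) (σ n) < ε) ∧
        Tendsto (fun n => dist (f^[n] y) (σ n)) atTop (𝓝 0))


/-- full orbit through `u` using a right inverse `g` for the backward part. -/
noncomputable def fgOrb (f g : X → X) (u : X) : ℤ → X :=
  fun j => if 0 ≤ j then f^[j.toNat] u else g^[(-j).toNat] u

lemma fgOrb_spec {X : Type*} (f g : X → X) (hg : ∀ x, f (g x) = x) (u : X) :
    ∀ j : ℤ, f (fgOrb f g u j) = fgOrb f g u (j + 1) := by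
  intro j
  rcases le_or_gt 0 j with hj | hj
  · have hj1 : (0:ℤ) ≤ j + 1 := by omega
    have ht : (j + 1).toNat = j.toNat + 1 := by omega
    simp only [fgOrb, if_pos hj, if_pos hj1, ht, Function.iterate_succ_apply']
  · -- j < 0
    have h1 : (-j).toNat = (-(j+1)).toNat + 1 := by omega
    have h2 : fgOrb f g u j = g^[(-(j+1)).toNat + 1] u := by
      simp only [fgOrb, if_neg (not_le.2 hj), h1]
    rw [h2, Function.iterate_succ_apply', hg]
    rcases eq_or_lt_of_le (by omega : j + 1 ≤ 0) with h0 | h0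
    · rw [h0]; simp [fgOrb]
    · simp [fgOrb, if_neg (not_le.2 h0)]

lemma fgOrb_nonneg {X : Type*} (f g : X → X) (u : X) (j : ℤ) (hj : 0 ≤ j) :
    fgOrb f g u j = f^[j.toNat] u := by simp [fgOrb, if_pos hj]

/-- uniform expansivity -/
lemma unifExp {X : Type*} [MetricSpace X] [CompactSpace X] (f : X → X) (hf : Continuous f)
    (b c ε : ℝ) (hcb : c < b) (hε : 0 < ε)
    (hexp : ∀ x y : ℤ → X, (∀ n : ℤ, f (x n) = x (n + 1)) → (∀ n : ℤ, f (y n) = y (n + 1)) →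
      (∀ n : ℤ, dist (x n) (y n) < b) → x 0 = y 0) :
    ∃ N : ℕ, ∀ x y : ℤ → X, (∀ n : ℤ, f (x n) = x (n + 1)) → (∀ n : ℤ, f (y n) = y (n + 1)) →
      (∀ n : ℤ, |n| ≤ (N : ℤ) → dist (x n) (y n) ≤ c) → dist (x 0) (y 0) < ε := by
  by_contra hcon
  push_neg at hcon
  set A : Set ((ℤ → X) × (ℤ → X)) := {p | ∀ n : ℤ, f (p.1 n) = p.1 (n + 1)} with hA
  set B : Set ((ℤ → X) × (ℤ → X)) := {p | ∀ n : ℤ, f (p.2 n) = p.2 (n + 1)} with hB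
  set C : ℕ → Set ((ℤ → X) × (ℤ → X)) :=
    fun N => {p | ∀ n : ℤ, |n| ≤ (N : ℤ) → dist (p.1 n) (p.2 n) ≤ c} with hC
  set D : Set ((ℤ → X) × (ℤ → X)) := {p | ε ≤ dist (p.1 0) (p.2 0)} with hD
  set t : ℕ → Set ((ℤ → X) × (ℤ → X)) := fun N => A ∩ B ∩ C N ∩ D with ht
  have hcl : ∀ N, IsClosed (t N) := by
    intro N
    refine IsClosed.inter (IsClosed.inter (IsClosed.inter ?_ ?_) ?_) ?_
    · rw [hA, Set.setOf_forall]
      exact isClosed_iInter fun n => isClosed_eq (hf.comp ((continuous_apply n).comp continuous_fst))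
        ((continuous_apply (n + 1)).comp continuous_fst)
    · rw [hB, Set.setOf_forall]
      exact isClosed_iInter fun n => isClosed_eq (hf.comp ((continuous_apply n).comp continuous_snd))
        ((continuous_apply (n + 1)).comp continuous_snd)
    · rw [hC]
      simp only
      rw [Set.setOf_forall]
      refine isClosed_iInter fun n => ?_
      rcases le_or_gt |n| (N : ℤ) with h | h
      · simp only [h, forall_true_left]
        exact isClosed_le (Continuous.dist ((continuous_apply n).comp continuous_fst)
          ((continuous_apply n).comp continuous_snd)) continuous_const
      · simp only [not_le.2 h, IsEmpty.forall_iff]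
        change IsClosed (Set.univ : Set ((ℤ → X) × (ℤ → X)))
        exact isClosed_univ
    · exact isClosed_le continuous_const (Continuous.dist ((continuous_apply 0).comp continuous_fst)
        ((continuous_apply 0).comp continuous_snd))
  have hanti : ∀ {M N : ℕ}, M ≤ N → t N ⊆ t M := by
    intro M N hMN p hp
    exact ⟨⟨hp.1.1, fun n hn => hp.1.2 n (hn.trans (by exact_mod_cast hMN))⟩, hp.2⟩
  have hdir : Directed (· ⊇ ·) t := fun M N =>
    ⟨max M N, hanti (le_max_left M N), hanti (le_max_right M N)⟩
  have hne : ∀ N, (t N).Nonempty := by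
    intro N
    obtain ⟨x, y, hx, hy, hwin, hd⟩ := hcon N
    exact ⟨(x, y), ⟨⟨hx, hy⟩, hwin⟩, hd⟩
  have hcomp : ∀ N, IsCompact (t N) := fun N => (hcl N).isCompact
  obtain ⟨p, hp⟩ := IsCompact.nonempty_iInter_of_directed_nonempty_isCompact_isClosed t hdir hne hcomp hcl
  simp only [Set.mem_iInter] at hp
  have hb : ∀ n : ℤ, dist (p.1 n) (p.2 n) < b := by
    intro n
    refine lt_of_le_of_lt ((hp n.natAbs).1.2 n ?_) hcb
    rw [Int.natCast_natAbs]
  have := hexp p.1 p.2 (hp 0).1.1.1 (hp 0).1.1.2 hb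
  have hd : ε ≤ dist (p.1 0) (p.2 0) := (hp 0).2
  rw [this, dist_self] at hd
  linarith

/-- forward uniform expansivity -/
lemma fwdExp {X : Type*} [MetricSpace X] [CompactSpace X] (f g : X → X) (hf : Continuous f)
    (hg : ∀ x, f (g x) = x) (b c : ℝ) (hcb : c < b)
    (hexp : ∀ x y : ℤ → X, (∀ n : ℤ, f (x n) = x (n + 1)) → (∀ n : ℤ, f (y n) = y (n + 1)) →
      (∀ n : ℤ, dist (x n) (y n) < b) → x 0 = y 0)
    (η : ℝ) (hη : 0 < η) :
    ∃ N : ℕ, ∀ u v : X, (∀ n : ℕ, dist (f^[n] u) (f^[n] v) ≤ c) →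
      ∀ n : ℕ, N ≤ n → dist (f^[n] u) (f^[n] v) < η := by
  obtain ⟨N, hN⟩ := unifExp f hf b c η hcb hη hexp
  refine ⟨N, fun u v h n hn => ?_⟩
  set x : ℤ → X := fun j => fgOrb f g u (j + n) with hx
  set y : ℤ → X := fun j => fgOrb f g v (j + n) with hyy
  have hxo : ∀ j : ℤ, f (x j) = x (j + 1) := by
    intro j
    have := fgOrb_spec f g hg u (j + n)
    simpa [hx, add_right_comm] using this
  have hyo : ∀ j : ℤ, f (y j) = y (j + 1) := by
    intro j
    have := fgOrb_spec f g hg v (j + n)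
    simpa [hyy, add_right_comm] using this
  have hwin : ∀ j : ℤ, |j| ≤ (N : ℤ) → dist (x j) (y j) ≤ c := by
    intro j hj
    have hjn : 0 ≤ j + n := by
      have h1 : (N : ℤ) ≤ n := by exact_mod_cast hn
      have h2 := abs_le.mp hj
      omega
    rw [hx, hyy]
    simp only
    rw [fgOrb_nonneg f g u _ hjn, fgOrb_nonneg f g v _ hjn]
    exact h _
  have := hN x y hxo hyo hwin
  have hx0 : x 0 = f^[n] u := by
    rw [hx]; simp only [zero_add]
    rw [fgOrb_nonneg f g u _ (by positivity)]
    simp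
  have hy0 : y 0 = f^[n] v := by
    rw [hyy]; simp only [zero_add]
    rw [fgOrb_nonneg f g v _ (by positivity)]
    simp
  rwa [hx0, hy0] at this

theorem shadowing_implies_sLimitShadowing {X : Type*} [MetricSpace X] [CompactSpace X]
    (f : X → X) (hf : Continuous f) (hsurj : Function.Surjective f)
    (hexp : CExpansive f) (hshad : Shadowing f) : SLimitShadowing f := by
  obtain ⟨b, hb, hexp'⟩ := hexp
  obtain ⟨g, hg⟩ := hsurj.hasRightInverse
  intro ε hε
  have hε0 : 0 < min ε (b / 3) := lt_min hε (by linarith)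
  obtain ⟨δ, hδ, hshadδ⟩ := hshad (min ε (b / 3)) hε0
  refine ⟨δ, hδ, ?_, ?_⟩
  · intro σ hσ
    obtain ⟨y, hy⟩ := hshadδ σ hσ
    exact ⟨y, fun n => (hy n).trans_le (min_le_left _ _)⟩
  · intro σ hσ hσ0
    obtain ⟨y, hy⟩ := hshadδ σ hσ
    refine ⟨y, fun n => (hy n).trans_le (min_le_left _ _), ?_⟩
    rw [Metric.tendsto_atTop]
    intro η hη
    have hη'0 : 0 < min η (b / 3) / 2 := by
      have : 0 < min η (b / 3) := lt_min hη (by linarith)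
      linarith
    obtain ⟨δ1, hδ1, hshadδ1⟩ := hshad (min η (b / 3) / 2) hη'0
    obtain ⟨m, hm⟩ := (Metric.tendsto_atTop.mp hσ0) δ1 hδ1
    have htail : ∀ n : ℕ, dist (f (σ (n + m))) (σ (n + 1 + m)) < δ1 := by
      intro n
      have := hm (n + m) (Nat.le_add_left m n)
      rw [Real.dist_eq, sub_zero, abs_of_nonneg dist_nonneg] at this
      have he : n + m + 1 = n + 1 + m := by omega
      rwa [he] at this
    obtain ⟨z, hz⟩ := hshadδ1 (fun n => σ (n + m)) htail
    have hclose : ∀ n : ℕ, dist (f^[n] (f^[m] y)) (f^[n] z) ≤ b / 2 := by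
      intro n
      have h1 : dist (f^[n + m] y) (σ (n + m)) < min ε (b / 3) := hy (n + m)
      have h2 : dist (f^[n] z) (σ (n + m)) < min η (b / 3) / 2 := hz n
      have h3 : min ε (b / 3) ≤ b / 3 := min_le_right _ _
      have h4 : min η (b / 3) ≤ b / 3 := min_le_right _ _
      have h5 : f^[n] (f^[m] y) = f^[n + m] y := by
        rw [← Function.iterate_add_apply]
      rw [h5]
      calc dist (f^[n + m] y) (f^[n] z)
          ≤ dist (f^[n + m] y) (σ (n + m)) + dist (f^[n] z) (σ (n + m)) :=
            dist_triangle_right _ _ _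
        _ ≤ b / 2 := by linarith
    obtain ⟨N, hN⟩ := fwdExp f g hf hg b (b / 2) (by linarith) hexp' (η / 2) (by linarith)
    refine ⟨N + m, fun n hn => ?_⟩
    have hkm : n - m + m = n := by omega
    have hkN : N ≤ n - m := by omega
    have hA := hN (f^[m] y) z hclose (n - m) hkN
    have hB : dist (f^[n - m] z) (σ (n - m + m)) < min η (b / 3) / 2 := hz (n - m)
    have h5 : f^[n - m] (f^[m] y) = f^[n] y := by
      rw [← Function.iterate_add_apply, hkm]
    rw [h5] at hA
    have h6 : min η (b / 3) ≤ η := min_le_left _ _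
    have h7 : dist (f^[n] y) (σ n) < η := by
      calc dist (f^[n] y) (σ n)
          ≤ dist (f^[n] y) (f^[n - m] z) + dist (f^[n - m] z) (σ n) := dist_triangle _ _ _
        _ < η / 2 + min η (b / 3) / 2 := add_lt_add hA (by rwa [hkm] at hB)
        _ ≤ η := by linarith
    rw [Real.dist_eq, sub_zero, abs_of_nonneg dist_nonneg]
    exact h7
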